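/- Let $\ggo$ be a real semisimple Lie algebra with Cartan decomposition $\ggo=\hg\oplus\qg$ and the inner product $-B|_\hg + B|_\qg$, normalized so $B(X,X)=\pm\langle X,X\rangle$ on $\hg,\qg$. Define $\mathrm{Cas}_\ggo(A) := \sum_i[(\mathrm{ad}\,X_i)^t,[\mathrm{ad}\,X_i,A]]$ for an orthonormal basis $\{X_i\}$ adapted to the decomposition. Then for any symmetric $A\in\mathrm{Sym}(\ggo)$ that is orthogonal to $\mathrm{ad}(\ggo)$ (in the trace inner product), one has $\tfrac12|\delta_\mu(A)|^2 - \tfrac12|A|^2 = \tfrac12\langle\mathrm{Cas}_\ggo(A),A\rangle$, where $\delta_\mu(A) := -A\mu(\cdot,\cdot)+\mu(A\cdot,\cdot)+\mu(\cdot,A\cdot)$ and $\mu$ is the Lie bracket. -/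

import Mathlib

set_option linter.unusedSectionVars false
set_option maxHeartbeats 1000000


noncomputable section

variable {V : Type*} [NormedAddCommGroup V] [InnerProductSpace ℝ V] [FiniteDimensional ℝ V]

/-- The Killing form `B(X,Y) = tr(ad X ∘ ad Y)` of the bracket `μ`. -/
def killing (μ : V →ₗ[ℝ] V →ₗ[ℝ] V) (X Y : V) : ℝ :=
  LinearMap.trace ℝ V (μ X ∘ₗ μ Y)

/-- Commutator of endomorphisms. -/
def opComm (P Q : Module.End ℝ V) : Module.End ℝ V := P ∘ₗ Q - Q ∘ₗ P

/-- The trace inner product `⟨A,B⟩ = tr(A Bᵗ)` on `gl(V)`. -/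
def eip (A B : Module.End ℝ V) : ℝ :=
  LinearMap.trace ℝ V (A ∘ₗ LinearMap.adjoint (B : V →ₗ[ℝ] V))

/-- The inner product on bilinear maps relative to an orthonormal basis. -/
def bip {ι : Type*} [Fintype ι] (b : OrthonormalBasis ι ℝ V) (f g : V → V → V) : ℝ :=
  ∑ i, ∑ j, (inner ℝ (f (b i) (b j)) (g (b i) (b j)) : ℝ)

/-- `δ_μ(A) = -Aμ(·,·) + μ(A·,·) + μ(·,A·)`. -/
def deltaMap (μ : V →ₗ[ℝ] V →ₗ[ℝ] V) (A : Module.End ℝ V) : V → V → V :=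
  fun X Y => -(A (μ X Y)) + μ (A X) Y + μ X (A Y)

/-- `Cas_g(A) = ∑ [(ad Xᵢ)ᵗ, [ad Xᵢ, A]]`. -/
def casG {ι : Type*} [Fintype ι] (b : OrthonormalBasis ι ℝ V)
    (μ : V →ₗ[ℝ] V →ₗ[ℝ] V) (A : Module.End ℝ V) : Module.End ℝ V :=
  ∑ i, opComm (LinearMap.adjoint (μ (b i))) (opComm (μ (b i)) A)

lemma opComm_eq (P Q : Module.End ℝ V) : opComm P Q = P * Q - Q * P := rfl

lemma s8_trace_eq_sum_inner {ι : Type*} [Fintype ι] [DecidableEq ι] (b : OrthonormalBasis ι ℝ V)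
    (T : Module.End ℝ V) : LinearMap.trace ℝ V T = ∑ i, (inner ℝ (b i) (T (b i)) : ℝ) := by
  rw [LinearMap.trace_eq_matrix_trace ℝ b.toBasis, Matrix.trace]
  simp [Matrix.diag, LinearMap.toMatrix_apply, OrthonormalBasis.coe_toBasis,
    OrthonormalBasis.coe_toBasis_repr_apply, OrthonormalBasis.repr_apply_apply]

/-- for a real semisimple Lie algebra with Cartan decomposition and the
inner product `-B|_h + B|_q`, an orthonormal basis adapted to the decomposition, and a
symmetric `A` orthogonal to `ad(g)`, one has
`½|δ_μ(A)|² - ½|A|² = ½⟨Cas_g(A), A⟩`. -/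
theorem statement8 {n : ℕ} (μ : V →ₗ[ℝ] V →ₗ[ℝ] V)
    (halt : ∀ X, μ X X = 0)
    (hjac : ∀ X Y Z, μ X (μ Y Z) = μ (μ X Y) Z + μ Y (μ X Z))
    (hss : ∀ X : V, (∀ Y : V, killing μ X Y = 0) → X = 0)
    (h q : Submodule ℝ V) (hc : IsCompl h q)
    (horth : ∀ x ∈ h, ∀ y ∈ q, (inner ℝ x y : ℝ) = 0)
    (hhh : ∀ x ∈ h, ∀ y ∈ h, μ x y ∈ h)
    (hhq : ∀ x ∈ h, ∀ y ∈ q, μ x y ∈ q)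
    (hqq : ∀ x ∈ q, ∀ y ∈ q, μ x y ∈ h)
    (hBh : ∀ x ∈ h, ∀ y ∈ h, killing μ x y = -(inner ℝ x y : ℝ))
    (hBq : ∀ x ∈ q, ∀ y ∈ q, killing μ x y = (inner ℝ x y : ℝ))
    (hBhq : ∀ x ∈ h, ∀ y ∈ q, killing μ x y = 0)
    (b : OrthonormalBasis (Fin n) ℝ V)
    (hb : ∀ i, b i ∈ h ∨ b i ∈ q)
    (A : Module.End ℝ V) (hA : LinearMap.IsSymmetric (A : V →ₗ[ℝ] V))
    (hAort : ∀ Y : V, eip A (μ Y) = 0) :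
    (1/2) * bip b (deltaMap μ A) (deltaMap μ A) - (1/2) * eip A A =
      (1/2) * eip (casG b μ A) A := by
  classical
  set tr := LinearMap.trace ℝ V with htrdef
  have tmc : ∀ f g : Module.End ℝ V, tr (f * g) = tr (g * f) :=
    fun f g => LinearMap.trace_mul_comm ℝ f g
  have tmc3 : ∀ f g k : Module.End ℝ V, tr (f * (g * k)) = tr (k * (f * g)) :=
    fun f g k => LinearMap.trace_mul_cycle' ℝ f g k
  have tsum : ∀ T : Module.End ℝ V, tr T = ∑ i, (inner ℝ (b i) (T (b i)) : ℝ) :=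
    fun T => s8_trace_eq_sum_inner b T
  -- antisymmetry
  have hanti : ∀ X Y : V, μ X Y = -(μ Y X) := by
    intro X Y
    have h0 := halt (X + Y)
    simp only [map_add, LinearMap.add_apply, halt, zero_add, add_zero] at h0
    rw [add_comm] at h0
    exact eq_neg_of_add_eq_zero_left h0
  -- derivation property
  have hder : ∀ X Y : V, μ (μ X Y) = μ X * μ Y - μ Y * μ X := by
    intro X Y; ext Z
    simp only [LinearMap.sub_apply, Module.End.mul_apply]
    rw [eq_sub_iff_add_eq]
    exact (hjac X Y Z).symm
  -- killing symmetry and invariance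
  have hksymm : ∀ X Y : V, killing μ X Y = killing μ Y X :=
    fun X Y => LinearMap.trace_mul_comm ℝ (μ X) (μ Y)
  have hinv : ∀ X Y Z : V, killing μ (μ X Y) Z = -killing μ Y (μ X Z) := by
    intro X Y Z
    show tr (μ (μ X Y) * μ Z) = -(tr (μ Y * μ (μ X Z)))
    rw [hder X Y, hder X Z, sub_mul, mul_sub, map_sub, map_sub]
    have h1 : tr (μ X * μ Y * μ Z) = tr (μ Y * (μ Z * μ X)) := by
      rw [tmc (μ X * μ Y) (μ Z), tmc3 (μ Z) (μ X) (μ Y)]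
    have h2 : tr (μ Y * μ X * μ Z) = tr (μ Y * (μ X * μ Z)) := by rw [mul_assoc]
    rw [h1, h2]; ring
  -- projections and the Cartan involution θ
  set pH : V →ₗ[ℝ] V := h.subtype ∘ₗ (h.projectionOnto q hc) with hpHdef
  set pQ : V →ₗ[ℝ] V := q.subtype ∘ₗ (q.projectionOnto h hc.symm) with hpQdef
  have hpHmem : ∀ v, pH v ∈ h := fun v => (h.projectionOnto q hc v).2
  have hpQmem : ∀ v, pQ v ∈ q := fun v => (q.projectionOnto h hc.symm v).2
  have hsum : ∀ v, pH v + pQ v = v :=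
    fun v => Submodule.projection_add_projection_eq_self hc v
  set θ : V →ₗ[ℝ] V := pH - pQ with hθdef
  have hθh : ∀ x ∈ h, θ x = x := by
    intro x hx
    have h1 : pH x = x := by
      exact Submodule.projection_apply_of_mem_left hc hx
    have h2 : pQ x = 0 := by
      exact Submodule.projection_apply_of_mem_right hc.symm hx
    simp [hθdef, LinearMap.sub_apply, h1, h2]
  have hθq : ∀ x ∈ q, θ x = -x := by
    intro x hx
    have h1 : pH x = 0 := by
      exact Submodule.projection_apply_of_mem_right hc hx
    have h2 : pQ x = x := by
      exact Submodule.projection_apply_of_mem_left hc.symm hx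
    simp [hθdef, LinearMap.sub_apply, h1, h2]
  have hθθ : ∀ v, θ (θ v) = v := by
    intro v
    have e : θ v = pH v - pQ v := rfl
    rw [e, map_sub, hθh _ (hpHmem v), hθq _ (hpQmem v), sub_neg_eq_add, hsum]
  -- θ is an automorphism
  have hθμ : ∀ x y : V, θ (μ x y) = μ (θ x) (θ y) := by
    intro x y
    have hx := hsum x
    have hy := hsum y
    have m1 : μ (pH x) (pH y) ∈ h := hhh _ (hpHmem x) _ (hpHmem y)
    have m2 : μ (pH x) (pQ y) ∈ q := hhq _ (hpHmem x) _ (hpQmem y)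
    have m3 : μ (pQ x) (pH y) ∈ q := by
      rw [hanti]
      exact Submodule.neg_mem _ (hhq _ (hpHmem y) _ (hpQmem x))
    have m4 : μ (pQ x) (pQ y) ∈ h := hqq _ (hpQmem x) _ (hpQmem y)
    have e1 : μ x y = μ (pH x) (pH y) + μ (pH x) (pQ y) + (μ (pQ x) (pH y) + μ (pQ x) (pQ y)) := by
      conv_lhs => rw [← hx, ← hy]
      simp only [map_add, LinearMap.add_apply]
      abel
    have e2 : θ x = pH x - pQ x := rfl
    have e3 : θ y = pH y - pQ y := rfl
    rw [e1, map_add, map_add, map_add, hθh _ m1, hθq _ m2, hθq _ m3, hθh _ m4, e2, e3]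
    simp only [map_sub, LinearMap.sub_apply]
    abel
  -- bilinearity of the Killing form
  have kaddl : ∀ a c d : V, killing μ (a + c) d = killing μ a d + killing μ c d := by
    intro a c d
    show tr (μ (a + c) * μ d) = tr (μ a * μ d) + tr (μ c * μ d)
    rw [map_add, add_mul, map_add]
  have ksubr : ∀ a c d : V, killing μ a (c - d) = killing μ a c - killing μ a d := by
    intro a c d
    show tr (μ a * μ (c - d)) = tr (μ a * μ c) - tr (μ a * μ d)
    rw [map_sub, mul_sub, map_sub]
  -- inner product in terms of killing form
  have hip : ∀ u v : V, (inner ℝ u v : ℝ) = -killing μ u (θ v) := by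
    intro u v
    have i1 : (inner ℝ u v : ℝ) = inner ℝ (pH u) (pH v) + inner ℝ (pQ u) (pQ v) := by
      have i0 : (inner ℝ (pH u + pQ u) (pH v + pQ v) : ℝ)
          = inner ℝ (pH u) (pH v) + inner ℝ (pQ u) (pQ v) := by
        rw [inner_add_left, inner_add_right, inner_add_right,
          horth _ (hpHmem u) _ (hpQmem v)]
        have z2 : (inner ℝ (pQ u) (pH v) : ℝ) = 0 := by
          rw [real_inner_comm]; exact horth _ (hpHmem v) _ (hpQmem u)
        rw [z2]
        ring
      rw [hsum u, hsum v] at i0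
      exact i0
    have eθ : θ v = pH v - pQ v := rfl
    have k1 : killing μ u (θ v) =
        killing μ (pH u) (pH v) - killing μ (pH u) (pQ v)
          + (killing μ (pQ u) (pH v) - killing μ (pQ u) (pQ v)) := by
      conv_lhs => rw [show u = pH u + pQ u from (hsum u).symm]
      rw [kaddl, eθ, ksubr, ksubr]
    rw [i1, k1, hBh _ (hpHmem u) _ (hpHmem v), hBq _ (hpQmem u) _ (hpQmem v),
      hBhq _ (hpHmem u) _ (hpQmem v), hksymm (pQ u) (pH v), hBhq _ (hpHmem v) _ (hpQmem u)]
    ring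
  -- adjoint of ad
  have hadj : ∀ X : V, LinearMap.adjoint (μ X : V →ₗ[ℝ] V) = -(μ (θ X)) := by
    intro X
    have : (-(μ (θ X)) : Module.End ℝ V) = LinearMap.adjoint (μ X : V →ₗ[ℝ] V) := by
      rw [LinearMap.eq_adjoint_iff]
      intro x y
      rw [LinearMap.neg_apply, inner_neg_left, hip (μ (θ X) x) y, hip x (μ X y), hθμ X y,
        hinv (θ X) x (θ y)]
      ring
    exact this.symm
  have hAadj : LinearMap.adjoint (A : V →ₗ[ℝ] V) = A :=
    (LinearMap.isSymmetric_iff_isSelfAdjoint A).mp hA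
  -- orthogonality to ad(g), untwisted
  have hAort' : ∀ Z : V, tr ((A : Module.End ℝ V) * μ Z) = 0 := by
    intro Z
    have h0 := hAort (θ Z)
    have e : eip A (μ (θ Z)) = tr (A * LinearMap.adjoint (μ (θ Z) : V →ₗ[ℝ] V)) := rfl
    rw [e, hadj (θ Z), hθθ Z] at h0
    have : (A * -(μ Z) : Module.End ℝ V) = -(A * μ Z) := by rw [mul_neg]
    rw [this, map_neg, neg_eq_zero] at h0
    exact h0
  have hA2 : ∀ P Q : V, tr ((A : Module.End ℝ V) * (μ P * μ Q)) = tr (A * (μ Q * μ P)) := by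
    intro P Q
    have h1 : (μ P * μ Q : Module.End ℝ V) = μ (μ P Q) + μ Q * μ P := by
      rw [hder P Q]; abel
    rw [h1, mul_add, map_add, hAort' (μ P Q), zero_add]
  -- the key per-index computation
  have key : ∀ i : Fin n,
      (∑ j, (inner ℝ (deltaMap μ A (b i) (b j)) (deltaMap μ A (b i) (b j)) : ℝ))
        = tr (opComm (LinearMap.adjoint (μ (b i) : V →ₗ[ℝ] V)) (opComm (μ (b i)) A) * A)
          + (inner ℝ (A (b i)) (A (b i)) : ℝ) := by
    intro i
    obtain ⟨ad, had⟩ : ∃ ad : Module.End ℝ V, ad = μ (b i) := ⟨_, rfl⟩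
    obtain ⟨C, hC⟩ : ∃ C : Module.End ℝ V, C = ad * A - A * ad := ⟨_, rfl⟩
    obtain ⟨E, hE⟩ : ∃ E : Module.End ℝ V, E = μ (A (b i)) := ⟨_, rfl⟩
    have hadadj : LinearMap.adjoint (ad : V →ₗ[ℝ] V) = -(μ (θ (b i))) := by
      rw [had]; exact hadj (b i)
    have hAstar : star (A : Module.End ℝ V) = A := hAadj
    have hCadj : LinearMap.adjoint (C : V →ₗ[ℝ] V)
        = A * LinearMap.adjoint (ad : V →ₗ[ℝ] V) - LinearMap.adjoint (ad : V →ₗ[ℝ] V) * A := by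
      rw [hC, map_sub]
      simp only [← LinearMap.star_eq_adjoint, star_mul]
      rw [hAstar]
    have hEadj : LinearMap.adjoint (E : V →ₗ[ℝ] V) = -(μ (θ (A (b i)))) := by
      rw [hE]; exact hadj (A (b i))
    have hdelta : ∀ Y, deltaMap μ A (b i) Y = (C + E) Y := by
      intro Y
      show -(A (μ (b i) Y)) + μ (A (b i)) Y + μ (b i) (A Y) = (C + E) Y
      rw [hC, hE, had]
      simp only [LinearMap.add_apply, LinearMap.sub_apply, Module.End.mul_apply]
      abel
    have hsum1 : (∑ j, (inner ℝ (deltaMap μ A (b i) (b j)) (deltaMap μ A (b i) (b j)) : ℝ))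
        = tr (LinearMap.adjoint ((C + E) : V →ₗ[ℝ] V) * (C + E)) := by
      rw [tsum (LinearMap.adjoint ((C + E) : V →ₗ[ℝ] V) * (C + E))]
      refine Finset.sum_congr rfl fun j _ => ?_
      rw [hdelta, Module.End.mul_apply, LinearMap.adjoint_inner_right]
    -- four trace computations
    have t1 : tr (C * LinearMap.adjoint (C : V →ₗ[ℝ] V))
        = tr ((LinearMap.adjoint (ad : V →ₗ[ℝ] V) * C
            - C * LinearMap.adjoint (ad : V →ₗ[ℝ] V)) * A) := by
      have L : tr (C * LinearMap.adjoint (C : V →ₗ[ℝ] V))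
          = tr (LinearMap.adjoint (ad : V →ₗ[ℝ] V) * (C * A))
            - tr (A * (C * LinearMap.adjoint (ad : V →ₗ[ℝ] V))) := by
        rw [hCadj, mul_sub, map_sub, tmc3 C A (LinearMap.adjoint (ad : V →ₗ[ℝ] V)),
          tmc3 C (LinearMap.adjoint (ad : V →ₗ[ℝ] V)) A]
      have R : tr ((LinearMap.adjoint (ad : V →ₗ[ℝ] V) * C
            - C * LinearMap.adjoint (ad : V →ₗ[ℝ] V)) * A)
          = tr (LinearMap.adjoint (ad : V →ₗ[ℝ] V) * (C * A))
            - tr (A * (C * LinearMap.adjoint (ad : V →ₗ[ℝ] V))) := by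
        rw [sub_mul, map_sub, mul_assoc (LinearMap.adjoint (ad : V →ₗ[ℝ] V)) C A,
          tmc (C * LinearMap.adjoint (ad : V →ₗ[ℝ] V)) A]
      rw [L, R]
    have t2 : tr (C * LinearMap.adjoint (E : V →ₗ[ℝ] V)) = 0 := by
      rw [hEadj, mul_neg, map_neg, neg_eq_zero, hC, sub_mul, map_sub]
      have e1 : tr (ad * A * μ (θ (A (b i)))) = tr (A * (μ (θ (A (b i))) * ad)) := by
        rw [tmc (ad * A) (μ (θ (A (b i)))), tmc3 (μ (θ (A (b i)))) ad A]
      have e2 : tr (A * ad * μ (θ (A (b i)))) = tr (A * (ad * μ (θ (A (b i))))) := by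
        rw [mul_assoc]
      rw [e1, e2, had, hA2 (θ (A (b i))) (b i), sub_self]
    have t3 : tr (E * LinearMap.adjoint (C : V →ₗ[ℝ] V)) = 0 := by
      rw [hCadj, hadadj, mul_neg, neg_mul, sub_neg_eq_add, mul_add, map_add, mul_neg, map_neg]
      have e1 : tr (E * (A * μ (θ (b i)))) = tr (A * (μ (θ (b i)) * E)) := by
        rw [tmc3 E A (μ (θ (b i))), tmc3 (μ (θ (b i))) E A]
      have e2 : tr (E * (μ (θ (b i)) * A)) = tr (A * (E * μ (θ (b i)))) := by
        rw [tmc3 E (μ (θ (b i))) A]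
      rw [e1, e2, hE, hA2 (A (b i)) (θ (b i))]
      exact neg_add_cancel _
    have t4 : tr (E * LinearMap.adjoint (E : V →ₗ[ℝ] V)) = (inner ℝ (A (b i)) (A (b i)) : ℝ) := by
      rw [hEadj, mul_neg, map_neg, hE]
      have e1 : killing μ (A (b i)) (θ (A (b i))) = tr (μ (A (b i)) * μ (θ (A (b i)))) := rfl
      rw [← e1]
      exact (hip (A (b i)) (A (b i))).symm
    have hDexp : tr (LinearMap.adjoint ((C + E) : V →ₗ[ℝ] V) * (C + E))
        = tr (C * LinearMap.adjoint (C : V →ₗ[ℝ] V))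
          + tr (E * LinearMap.adjoint (C : V →ₗ[ℝ] V))
          + (tr (C * LinearMap.adjoint (E : V →ₗ[ℝ] V))
            + tr (E * LinearMap.adjoint (E : V →ₗ[ℝ] V))) := by
      rw [tmc (LinearMap.adjoint ((C + E) : V →ₗ[ℝ] V)) (C + E), map_add, mul_add, add_mul,
        add_mul, map_add, map_add, map_add]
    have hop : opComm (LinearMap.adjoint (μ (b i) : V →ₗ[ℝ] V)) (opComm (μ (b i)) A)
        = LinearMap.adjoint (ad : V →ₗ[ℝ] V) * C - C * LinearMap.adjoint (ad : V →ₗ[ℝ] V) := by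
      rw [opComm_eq, opComm_eq, ← had, ← hC]
    rw [hsum1, hDexp, t1, t2, t3, t4, hop]
    ring
  -- assembling everything
  have hbip : bip b (deltaMap μ A) (deltaMap μ A)
      = tr ((casG b μ A : Module.End ℝ V) * A) + ∑ i, (inner ℝ (A (b i)) (A (b i)) : ℝ) := by
    have e0 : bip b (deltaMap μ A) (deltaMap μ A)
        = ∑ i, ((tr (opComm (LinearMap.adjoint (μ (b i) : V →ₗ[ℝ] V)) (opComm (μ (b i)) A) * A))
            + (inner ℝ (A (b i)) (A (b i)) : ℝ)) :=
      Finset.sum_congr rfl fun i _ => key i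
    rw [e0, Finset.sum_add_distrib]
    congr 1
    have e1 : (casG b μ A : Module.End ℝ V) * A
        = ∑ i, opComm (LinearMap.adjoint (μ (b i) : V →ₗ[ℝ] V)) (opComm (μ (b i)) A) * A := by
      rw [casG, Finset.sum_mul]
    rw [e1, map_sum]
  have hAA : eip A A = ∑ i, (inner ℝ (A (b i)) (A (b i)) : ℝ) := by
    show tr ((A : Module.End ℝ V) * LinearMap.adjoint (A : V →ₗ[ℝ] V)) = _
    rw [hAadj, tsum]
    refine Finset.sum_congr rfl fun i _ => ?_
    rw [Module.End.mul_apply]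
    exact (hA (b i) (A (b i))).symm
  have hcas : eip (casG b μ A) A = tr ((casG b μ A : Module.End ℝ V) * A) := by
    show tr ((casG b μ A : Module.End ℝ V) * LinearMap.adjoint (A : V →ₗ[ℝ] V)) = _
    rw [hAadj]
  have hbip' : bip b (deltaMap μ A) (deltaMap μ A) = eip (casG b μ A) A + eip A A := by
    rw [hbip, hAA, hcas]
  rw [hbip']
  ring
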